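/- Let D be a strongly connected digraph containing no subdivision of B(k,1;1) (k ≥ 3), and let C be a directed cycle in D of length at least 2k-2. Then the subdigraph of D induced by the vertices of C has maximum degree at most 2k-2 in its underlying graph, and hence chromatic number at most 2k-2. -/

import Mathlib

universe u

section Defs
variable {V : Type u}

/-- `l` is a directed path from `x` to `y` in the digraph with arc relation `A`. -/
def DiPath (A : V → V → Prop) (x y : V) (l : List V) : Prop :=
  l.Chain' A ∧ l.Nodup ∧ l.head? = some x ∧ l.getLast? = some y

/-- The internal vertices of a path given as a list. -/
def internals (l : List V) : List V := l.tail.dropLast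

/-- `(a,b)` is an arc of the directed cycle represented by the list `l`. -/
def cycArc (l : List V) (a b : V) : Prop :=
  (a, b) ∈ l.zip l.tail ∨ (l.getLast? = some a ∧ l.head? = some b)

/-- `l` represents a directed cycle of the digraph with arc relation `A`;
its length (number of arcs = number of vertices) is `l.length`. -/
def DiCycle (A : V → V → Prop) (l : List V) : Prop :=
  l ≠ [] ∧ l.Chain' A ∧ l.Nodup ∧
    ∀ a b, l.getLast? = some a → l.head? = some b → A a b

/-- A digraph is strongly connected. -/
def StrongConn (A : V → V → Prop) : Prop := ∀ x y : V, ∃ l, DiPath A x y l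

/-- The chromatic number of a digraph: that of its underlying undirected graph. -/
noncomputable def dchrom (A : V → V → Prop) : ℕ∞ :=
  (SimpleGraph.fromRel A).chromaticNumber

/-- Two paths are internally disjoint. -/
def IntDisj (P Q : List V) : Prop :=
  (∀ v ∈ internals P, v ∉ internals Q) ∧ (∀ v ∈ internals Q, v ∉ internals P)

/-- `D` contains a subdivision of the bispindle `B(k1,k2;k3)`: vertices `x`, `y`
and three pairwise internally disjoint dipaths, two from `x` to `y` of lengths
at least `k1` and `k2`, and one from `y` to `x` of length at least `k3`. -/
def SubdivB (A : V → V → Prop) (k1 k2 k3 : ℕ) : Prop :=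
  ∃ (x y : V) (P1 P2 P3 : List V),
    DiPath A x y P1 ∧ DiPath A x y P2 ∧ DiPath A y x P3 ∧
    k1 + 1 ≤ P1.length ∧ k2 + 1 ≤ P2.length ∧ k3 + 1 ≤ P3.length ∧
    P1 ≠ P2 ∧ IntDisj P1 P2 ∧ IntDisj P1 P3 ∧ IntDisj P2 P3

/-- The length of the subpath of the cycle `l` from `a` to `b` (number of arcs). -/
def cycDist [DecidableEq V] (l : List V) (a b : V) : ℕ :=
  (l.rotate (l.idxOf a)).idxOf b

/-- The subpath (vertex list) of the cycle `l` from `a` to `b`. -/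
def cycSub [DecidableEq V] (l : List V) (a b : V) : List V :=
  (l.rotate (l.idxOf a)).take (cycDist l a b + 1)

/-- The intersection of the cycles `Ci` and `Cj` is the common directed subpath
from `a` to `b`, having at most `k` vertices. -/
def InterPath [DecidableEq V] (k : ℕ) (Ci Cj : List V) (a b : V) : Prop :=
  a ∈ Ci ∧ b ∈ Cj ∧ (∀ x, (x ∈ Ci ∧ x ∈ Cj) ↔ x ∈ cycSub Ci a b) ∧
  cycSub Ci a b = cycSub Cj a b ∧ (cycSub Ci a b).length ≤ k

/-- A `k`-suitable collection of directed cycles: all cycles have length at least `8k`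
and any two distinct cycles intersect on a directed subpath of at most `k` vertices. -/
def Suitable [DecidableEq V] (A : V → V → Prop) (k : ℕ) (𝒞 : Set (List V)) : Prop :=
  (∀ C ∈ 𝒞, DiCycle A C ∧ 8 * k ≤ C.length) ∧
  ∀ C ∈ 𝒞, ∀ C' ∈ 𝒞, C ≠ C' → (∃ x, x ∈ C ∧ x ∈ C') → ∃ a b, InterPath k C C' a b

/-- Adjacency in the intersection graph of a collection of cycles. -/
def interRel (𝒞 : Set (List V)) : List V → List V → Prop :=
  fun C C' => C ∈ 𝒞 ∧ C' ∈ 𝒞 ∧ ∃ x, x ∈ C ∧ x ∈ C'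

/-- `(a,b)` is an arc of the union of the cycles of `𝒞`. -/
def unionArc (𝒞 : Set (List V)) (a b : V) : Prop := ∃ C ∈ 𝒞, cycArc C a b

/-- A graph is 2-connected. -/
def TwoConnectedG {W : Type*} (G : SimpleGraph W) : Prop :=
  G.Connected ∧ ∀ w : W, (G.induce {u | u ≠ w}).Connected

end Defs



/-- peeling color function -/
def pc : List ℕ → ℕ → ℕ
| [], i => i
| b :: bs, i => if i < b then i else pc bs (i - b)

lemma pc_le (bs : List ℕ) (i : ℕ) : pc bs i ≤ i := by
  induction bs generalizing i with
  | nil => simp [pc]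
  | cons b bs ih =>
    simp only [pc]
    split
    · exact le_rfl
    · exact (ih _).trans (Nat.sub_le _ _)

lemma pc_lt (bs : List ℕ) (M : ℕ) (h : ∀ b ∈ bs, b ≤ M) {i : ℕ} (hi : i < bs.sum) :
    pc bs i < M := by
  induction bs generalizing i with
  | nil => simp at hi
  | cons b bs ih =>
    simp only [pc]
    split
    · exact lt_of_lt_of_le ‹_› (h b (by simp))
    · exact ih (fun x hx => h x (by simp [hx])) (by simp at hi; omega)

lemma pc_L1 (bs : List ℕ) (k : ℕ) (h : ∀ b ∈ bs, k ≤ b) {i : ℕ} (hi : i < bs.sum) :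
    k ≤ pc bs i + (bs.sum - i) := by
  induction bs generalizing i with
  | nil => simp at hi
  | cons b bs ih =>
    simp only [pc, List.sum_cons] at hi ⊢
    split
    · have := h b (by simp); omega
    · have := ih (fun x hx => h x (by simp [hx])) (i := i - b) (by omega)
      omega

lemma pc_L2 (bs : List ℕ) (k : ℕ) (h : ∀ b ∈ bs, k ≤ b) {i i' : ℕ} (hi' : i' < bs.sum)
    (hlt : i < i') (he : pc bs i = pc bs i') : k ≤ i' - i := by
  induction bs generalizing i i' with
  | nil => simp at hi'
  | cons b bs ih =>
    simp only [pc, List.sum_cons] at hi' he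
    by_cases h1 : i < b
    · by_cases h2 : i' < b
      · simp [h1, h2] at he; omega
      · simp [h1, h2] at he
        have hle := pc_le bs (i' - b)
        have := h b (by simp)
        omega
    · have h2 : ¬ i' < b := by omega
      simp [h1, h2] at he
      have := ih (fun x hx => h x (by simp [hx])) (i := i - b) (i' := i' - b) (by omega) (by omega) he
      omega

lemma exists_blocks (k : ℕ) (hk : 3 ≤ k) : ∀ n, 2 * k ≤ n →
    ∃ bs : List ℕ, bs.sum = n ∧ ∀ b ∈ bs, k ≤ b ∧ b ≤ 2 * k - 2 := by
  intro n
  induction n using Nat.strong_induction_on with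
  | _ n ih =>
    intro hn
    by_cases h : n ≤ 4 * k - 4
    · refine ⟨[n / 2, n - n / 2], by simp; omega, ?_⟩
      intro b hb
      simp at hb
      rcases hb with rfl | rfl <;> omega
    · obtain ⟨bs, hsum, hmem⟩ := ih (n - k) (by omega) (by omega)
      refine ⟨k :: bs, by simp [hsum]; omega, ?_⟩
      intro b hb
      simp at hb
      rcases hb with rfl | hb
      · omega
      · exact hmem b hb


section Aux
variable {V : Type u} [DecidableEq V] {A : V → V → Prop} {C : List V} {u v : V}

omit [DecidableEq V] in
lemma mem_internals {l : List V} {x : V} :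
    x ∈ internals l ↔ ∃ j, ∃ _ : j + 3 ≤ l.length, x = l[j+1] := by
  unfold internals
  have hlen : l.tail.dropLast.length = l.length - 2 := by
    rw [List.length_dropLast, List.length_tail]; omega
  rw [List.mem_iff_getElem]
  constructor
  · rintro ⟨j, hj, rfl⟩
    rw [hlen] at hj
    refine ⟨j, by omega, ?_⟩
    rw [List.getElem_dropLast, List.getElem_tail]
  · rintro ⟨j, hj, rfl⟩
    refine ⟨j, by rw [hlen]; omega, ?_⟩
    rw [List.getElem_dropLast, List.getElem_tail]

omit [DecidableEq V] in
lemma isCyc_rotate_one {l : List V}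
    (h1 : l.Chain' A) (h2 : ∀ a b, l.getLast? = some a → l.head? = some b → A a b) :
    (l.rotate 1).Chain' A ∧
      ∀ a b, (l.rotate 1).getLast? = some a → (l.rotate 1).head? = some b → A a b := by
  match l with
  | [] => exact ⟨List.isChain_nil, by simp⟩
  | a :: t =>
    rw [show (1:ℕ) = 0 + 1 from rfl, List.rotate_cons_succ, List.rotate_zero]
    constructor
    · rw [List.Chain', List.isChain_append]
      refine ⟨(List.isChain_cons.1 h1).2, List.isChain_singleton a, ?_⟩
      intro x hx y hy
      simp at hy; subst hy
      exact h2 x a (by cases t with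
        | nil => simp at hx
        | cons c t' => simpa [List.getLast?_cons_cons] using hx) rfl
    · intro x y hx hy
      rw [List.getLast?_concat] at hx
      simp at hx; subst hx
      cases t with
      | nil => simp at hy; subst hy; exact h2 a a rfl rfl
      | cons c t' =>
        simp at hy; subst hy
        exact (List.isChain_cons.1 h1).1 c rfl

omit [DecidableEq V] in
lemma isCyc_rotate {l : List V}
    (h1 : l.Chain' A) (h2 : ∀ a b, l.getLast? = some a → l.head? = some b → A a b) (m : ℕ) :
    (l.rotate m).Chain' A ∧
      ∀ a b, (l.rotate m).getLast? = some a → (l.rotate m).head? = some b → A a b := by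
  induction m with
  | zero => simpa using ⟨h1, h2⟩
  | succ m ih =>
    have := isCyc_rotate_one ih.1 ih.2
    rwa [List.rotate_rotate] at this

lemma cycIdx_lemma (hnd : C.Nodup) (hv : v ∈ C) :
    cycDist C u v < C.length ∧
      C.idxOf v = (C.idxOf u + cycDist C u v) % C.length := by
  set iu := C.idxOf u with hiu
  set r := C.rotate iu with hr
  have hvr : v ∈ r := List.mem_rotate.2 hv
  have hd : cycDist C u v < C.length := by
    have := List.idxOf_lt_length_iff.2 hvr
    rwa [List.length_rotate] at this
  refine ⟨hd, ?_⟩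
  have h1 : r[cycDist C u v]'(by rwa [List.length_rotate]) = v :=
    List.getElem_idxOf (by rwa [List.length_rotate])
  rw [List.getElem_rotate] at h1
  conv_lhs => rw [← h1]
  rw [List.Nodup.idxOf_getElem hnd]
  ring_nf

lemma cycDist_lt (hnd : C.Nodup) (hv : v ∈ C) : cycDist C u v < C.length :=
  (cycIdx_lemma hnd hv).1

lemma cycDist_unique (hnd : C.Nodup) (hv : v ∈ C) {d : ℕ} (hd : d < C.length)
    (h : C.idxOf v = (C.idxOf u + d) % C.length) : cycDist C u v = d := by
  obtain ⟨hlt, he⟩ := cycIdx_lemma (u := u) hnd hv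
  have h1 : C.idxOf u + cycDist C u v ≡ C.idxOf u + d [MOD C.length] := by
    unfold Nat.ModEq; rw [← he, ← h]
  have h2 := Nat.ModEq.add_left_cancel' _ h1
  unfold Nat.ModEq at h2
  rwa [Nat.mod_eq_of_lt hlt, Nat.mod_eq_of_lt hd] at h2

lemma cycDist_getElem (hnd : C.Nodup) {i d : ℕ} (hi : i < C.length) (hd : d < C.length) :
    cycDist C C[i] (C[(i+d) % C.length]'(Nat.mod_lt _ (by omega))) = d := by
  refine cycDist_unique hnd (C.getElem_mem _) hd ?_
  rw [List.Nodup.idxOf_getElem hnd, List.Nodup.idxOf_getElem hnd]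

lemma cycDist_pos (hnd : C.Nodup) (hu : u ∈ C) (hv : v ∈ C) (hne : u ≠ v) :
    1 ≤ cycDist C u v := by
  rcases Nat.eq_zero_or_pos (cycDist C u v) with h0 | h1
  · exfalso
    obtain ⟨hlt, he⟩ := cycIdx_lemma (u := u) hnd hv
    rw [h0, Nat.add_zero, Nat.mod_eq_of_lt (List.idxOf_lt_length_iff.2 hu)] at he
    apply hne
    have h2 : C[C.idxOf u]'(List.idxOf_lt_length_iff.2 hu) = u := List.getElem_idxOf _
    have h3 : C[C.idxOf v]'(List.idxOf_lt_length_iff.2 hv) = v := List.getElem_idxOf _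
    rw [← h2, ← h3]
    congr 1
    omega
  · exact h1

lemma cycDist_add (hnd : C.Nodup) (hu : u ∈ C) (hv : v ∈ C) (hne : u ≠ v) :
    cycDist C u v + cycDist C v u = C.length := by
  obtain ⟨hlt1, he1⟩ := cycIdx_lemma (u := u) hnd hv
  obtain ⟨hlt2, he2⟩ := cycIdx_lemma (u := v) hnd hu
  have hp1 := cycDist_pos hnd hu hv hne
  have hp2 := cycDist_pos hnd hv hu (Ne.symm hne)
  set d1 := cycDist C u v
  set d2 := cycDist C v u
  have hiu : C.idxOf u < C.length := List.idxOf_lt_length_iff.2 hu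
  have h3 : C.idxOf u = (C.idxOf u + (d1 + d2)) % C.length := by
    conv_lhs => rw [he2, he1]
    rw [Nat.mod_add_mod, Nat.add_assoc]
  have h4 : C.idxOf u + 0 ≡ C.idxOf u + (d1 + d2) [MOD C.length] := by
    unfold Nat.ModEq
    rw [Nat.add_zero, ← h3, Nat.mod_eq_of_lt hiu]
  have h5 := Nat.ModEq.add_left_cancel' _ h4
  have h6 : C.length ∣ d1 + d2 := (Nat.modEq_zero_iff_dvd).1 h5.symm
  obtain ⟨c, hc⟩ := h6
  rcases c with _ | _ | c
  · omega
  · omega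
  · have hx : C.length * (c+1+1) = C.length * c + C.length + C.length := by ring
    omega


/-- Build a B(k,1;1) subdivision from a "rotated cycle" list with a long chord. -/
lemma build_B {r : List V} {k d : ℕ} (hk : 3 ≤ k)
    (hrch : r.Chain' A)
    (hrwrap : ∀ a b, r.getLast? = some a → r.head? = some b → A a b)
    (hrnd : r.Nodup) (hdk : k ≤ d) (hdlt : d < r.length)
    (hA : A (r[0]'(by omega)) (r[d]'(by omega))) :
    SubdivB A k 1 1 := by
  set n := r.length with hn
  have hn0 : 0 < n := by omega
  set u := r[0]'(by omega) with hu_def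
  set v := r[d]'(by omega) with hv_def
  have hne : u ≠ v := by
    intro h
    have := (hrnd.getElem_inj_iff).1 (hu_def ▸ hv_def ▸ h)
    omega
  have hwarc : A (r[n - 1]'(by omega)) u := by
    apply hrwrap
    · rw [List.getLast?_eq_getElem?, List.getElem?_eq_getElem (by omega)]
    · rw [List.head?_eq_getElem?, List.getElem?_eq_getElem (by omega)]
  have hP1len : (r.take (d+1)).length = d + 1 := by
    rw [List.length_take]; omega
  have hP3len : (r.drop d ++ [u]).length = (n - d) + 1 := by
    rw [List.length_append, List.length_drop]; simp [hn]
  have hP1get : ∀ (j : ℕ) (hj : j < d + 1), (r.take (d+1))[j]'(by omega) = r[j]'(by omega) := by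
    intro j hj
    rw [List.getElem_take]
  have hP3get : ∀ (j : ℕ) (hj : j < n - d),
      (r.drop d ++ [u])[j]'(by omega) = r[d + j]'(by omega) := by
    intro j hj
    rw [List.getElem_append_left (by rw [List.length_drop]; omega), List.getElem_drop]
  have hdP1 : DiPath A u v (r.take (d+1)) := by
    refine ⟨hrch.take _, (List.take_sublist _ _).nodup hrnd, ?_, ?_⟩
    · rw [List.head?_eq_getElem?, List.getElem?_eq_getElem (by omega), hP1get 0 (by omega)]
    · rw [List.getLast?_eq_getElem?, hP1len, List.getElem?_eq_getElem (by omega)]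
      simp only [Nat.add_sub_cancel]
      rw [hP1get d (by omega)]
  have hdP2 : DiPath A u v [u, v] := by
    refine ⟨List.isChain_pair.2 hA, by simp [hne], rfl, rfl⟩
  have hdrop_last : (r.drop d).getLast? = some (r[n - 1]'(by omega)) := by
    rw [List.getLast?_eq_getElem?, List.length_drop,
      List.getElem?_eq_getElem (by rw [List.length_drop]; omega), List.getElem_drop]
    congr 2
    omega
  have hdP3 : DiPath A v u (r.drop d ++ [u]) := by
    refine ⟨?_, ?_, ?_, ?_⟩
    · rw [List.Chain', List.isChain_append]
      refine ⟨hrch.drop _, List.isChain_singleton u, ?_⟩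
      intro x hx y hy
      simp only [List.head?_cons, Option.mem_some_iff] at hy
      subst hy
      rw [hdrop_last] at hx
      simp only [Option.mem_some_iff] at hx
      subst hx
      exact hwarc
    · rw [List.nodup_append]
      refine ⟨(List.drop_sublist _ _).nodup hrnd, List.nodup_singleton u, ?_⟩
      intro a ha b hau hab
      simp only [List.mem_singleton] at hau
      subst hau
      subst hab
      obtain ⟨j, hj, hje⟩ := List.mem_iff_getElem.1 ha
      rw [List.getElem_drop] at hje
      rw [hu_def] at hje
      have := (hrnd.getElem_inj_iff).1 hje
      omega
    · rw [List.head?_eq_getElem?, List.getElem?_eq_getElem (by omega),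
        hP3get 0 (by omega)]
      simp only [Nat.add_zero, hv_def]
    · rw [List.getLast?_concat]
  have hP1ne : r.take (d+1) ≠ [u, v] := by
    intro h
    have := congrArg List.length h
    rw [hP1len] at this
    simp at this
    omega
  have hintP2 : internals [u, v] = [] := rfl
  have hmemP1 : ∀ x ∈ internals (r.take (d+1)),
      ∃ j, ∃ _ : 1 ≤ j ∧ j ≤ d - 1, x = r[j]'(by omega) := by
    intro x hx
    obtain ⟨j, hj, hje⟩ := mem_internals.1 hx
    rw [hP1len] at hj
    refine ⟨j+1, by omega, ?_⟩
    rw [hje, hP1get (j+1) (by omega)]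
  have hmemP3 : ∀ x ∈ internals (r.drop d ++ [u]), ∃ j, ∃ _ : d + 1 ≤ j ∧ j ≤ n - 1,
      x = r[j]'(by omega) := by
    intro x hx
    obtain ⟨j, hj, hje⟩ := mem_internals.1 hx
    rw [hP3len] at hj
    refine ⟨d + (j+1), by omega, ?_⟩
    rw [hje, hP3get (j+1) (by omega)]
  have hdisj13 : ∀ x, x ∈ internals (r.take (d+1)) → x ∈ internals (r.drop d ++ [u]) → False := by
    intro x h1 h3
    obtain ⟨j1, hj1, he1⟩ := hmemP1 x h1
    obtain ⟨j3, hj3, he3⟩ := hmemP3 x h3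
    rw [he3] at he1
    have := (hrnd.getElem_inj_iff).1 he1
    omega
  exact ⟨u, v, r.take (d+1), [u, v], r.drop d ++ [u], hdP1, hdP2, hdP3,
    by omega, by simp, by rw [hP3len]; omega,
    hP1ne,
    ⟨fun x _ h => by rw [hintP2] at h; simp at h, fun x h => by rw [hintP2] at h; simp at h⟩,
    ⟨fun x h1 h3 => hdisj13 x h1 h3, fun x h3 h1 => hdisj13 x h1 h3⟩,
    ⟨fun x h => by rw [hintP2] at h; simp at h, fun x _ h => by rw [hintP2] at h; simp at h⟩⟩

/-- The key chord lemma. -/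
lemma chord {k : ℕ} (hk : 3 ≤ k) (hC : DiCycle A C) (hfree : ¬ SubdivB A k 1 1)
    (hu : u ∈ C) (hv : v ∈ C) (hne : u ≠ v) (hA : A u v) :
    cycDist C u v ≤ k - 1 := by
  by_contra hcon
  push_neg at hcon
  obtain ⟨hne0, hch, hnd, hwrap⟩ := hC
  have hdlt : cycDist C u v < C.length := cycDist_lt hnd hv
  have hn0 : 0 < C.length := List.length_pos_iff.2 hne0
  have hiu : C.idxOf u < C.length := List.idxOf_lt_length_iff.2 hu
  obtain ⟨hrch, hrwrap⟩ := isCyc_rotate hch hwrap (C.idxOf u)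
  have hrnd : (C.rotate (C.idxOf u)).Nodup := List.nodup_rotate.2 hnd
  have hrlen : (C.rotate (C.idxOf u)).length = C.length := List.length_rotate _ _
  have h0 : (C.rotate (C.idxOf u))[0]'(by omega) = u := by
    rw [List.getElem_rotate]
    simp only [Nat.zero_add, Nat.mod_eq_of_lt hiu]
    exact List.getElem_idxOf hiu
  have hvr : v ∈ C.rotate (C.idxOf u) := List.mem_rotate.2 hv
  have hvd : (C.rotate (C.idxOf u))[cycDist C u v]'(by omega) = v :=
    List.getElem_idxOf (List.idxOf_lt_length_iff.2 hvr)
  apply hfree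
  refine build_B hk hrch hrwrap hrnd (k := k) (d := cycDist C u v) (by omega) (by omega) ?_
  rw [h0, hvd]
  exact hA

lemma eq_of_cycDist_right (hnd : C.Nodup) (hu : u ∈ C) {u' : V} (hu' : u' ∈ C)
    (h : cycDist C v u = cycDist C v u') : u = u' := by
  obtain ⟨hl1, he1⟩ := cycIdx_lemma (u := v) hnd hu
  obtain ⟨hl2, he2⟩ := cycIdx_lemma (u := v) hnd hu'
  rw [← h] at he2
  have hiu : C.idxOf u < C.length := List.idxOf_lt_length_iff.2 hu
  have hiu' : C.idxOf u' < C.length := List.idxOf_lt_length_iff.2 hu'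
  have : C.idxOf u = C.idxOf u' := by rw [he1, he2]
  have h2 : C[C.idxOf u]'hiu = u := List.getElem_idxOf _
  have h3 : C[C.idxOf u']'hiu' = u' := List.getElem_idxOf _
  rw [← h2, ← h3]
  congr 1

lemma eq_of_cycDist_left (hnd : C.Nodup) (hu : u ∈ C) {u' : V} (hu' : u' ∈ C) (hv : v ∈ C)
    (h : cycDist C u v = cycDist C u' v) : u = u' := by
  obtain ⟨hl1, he1⟩ := cycIdx_lemma (u := u) hnd hv
  obtain ⟨hl2, he2⟩ := cycIdx_lemma (u := u') hnd hv
  rw [← h] at he2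
  have hiu : C.idxOf u < C.length := List.idxOf_lt_length_iff.2 hu
  have hiu' : C.idxOf u' < C.length := List.idxOf_lt_length_iff.2 hu'
  have hmeq : C.idxOf u + cycDist C u v ≡ C.idxOf u' + cycDist C u v [MOD C.length] := by
    unfold Nat.ModEq
    rw [← he1, ← he2]
  have := Nat.ModEq.add_right_cancel' _ hmeq
  unfold Nat.ModEq at this
  rw [Nat.mod_eq_of_lt hiu, Nat.mod_eq_of_lt hiu'] at this
  have h2 : C[C.idxOf u]'hiu = u := List.getElem_idxOf _
  have h3 : C[C.idxOf u']'hiu' = u' := List.getElem_idxOf _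
  rw [← h2, ← h3]
  congr 1

lemma deg_bound {k : ℕ} (hk : 3 ≤ k) (hC : DiCycle A C) (hfree : ¬ SubdivB A k 1 1)
    {v : V} (hv : v ∈ C) :
    {u | u ∈ C ∧ u ≠ v ∧ (A u v ∨ A v u)}.ncard ≤ 2 * k - 2 := by
  classical
  have hnd := hC.2.2.1
  set S : Set V := {u | u ∈ C ∧ u ≠ v ∧ (A u v ∨ A v u)} with hS
  have hcard : ((Finset.Icc 1 (2*k-2) : Finset ℕ) : Set ℕ).ncard = 2*k-2 := by
    rw [Set.ncard_coe_finset, Nat.card_Icc]; omega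
  rw [← hcard]
  refine Set.ncard_le_ncard_of_injOn
    (fun u => if A u v then cycDist C u v else k - 1 + cycDist C v u) ?_ ?_ (Set.toFinite _)
  · rintro u ⟨huC, hune, harc⟩
    simp only [Finset.coe_Icc, Set.mem_Icc]
    by_cases hA : A u v
    · rw [if_pos hA]
      have h1 := chord hk hC hfree huC hv hune hA
      have h2 := cycDist_pos hnd huC hv hune
      omega
    · rw [if_neg hA]
      have hA' : A v u := by tauto
      have h1 := chord hk hC hfree hv huC (Ne.symm hune) hA'
      have h2 := cycDist_pos hnd hv huC (Ne.symm hune)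
      omega
  · rintro u ⟨huC, hune, harcu⟩ u' ⟨huC', hune', harcu'⟩ he
    simp only at he
    by_cases hA : A u v <;> by_cases hA' : A u' v
    · rw [if_pos hA, if_pos hA'] at he
      exact eq_of_cycDist_left hnd huC huC' hv he
    · rw [if_pos hA, if_neg hA'] at he
      have hB' : A v u' := by tauto
      have h1 := chord hk hC hfree huC hv hune hA
      have h2 := cycDist_pos hnd hv huC' (Ne.symm hune')
      omega
    · rw [if_neg hA, if_pos hA'] at he
      have hB : A v u := by tauto
      have h1 := chord hk hC hfree huC' hv hune' hA'
      have h2 := cycDist_pos hnd hv huC (Ne.symm hune)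
      omega
    · rw [if_neg hA, if_neg hA'] at he
      have : cycDist C v u = cycDist C v u' := by omega
      exact eq_of_cycDist_right hnd huC huC' this

lemma edge_dist {k : ℕ} (hk : 3 ≤ k) (hC : DiCycle A C) (hfree : ¬ SubdivB A k 1 1)
    {i i' : ℕ} (hi : i < C.length) (hi' : i' < C.length) (hlt : i < i')
    (hadj : A (C[i]'hi) (C[i']'hi') ∨ A (C[i']'hi') (C[i]'hi)) :
    i' - i ≤ k - 1 ∨ C.length - (i' - i) ≤ k - 1 := by
  have hnd := hC.2.2.1
  have hne : (C[i]'hi) ≠ (C[i']'hi') := by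
    intro h
    have := (hnd.getElem_inj_iff).1 h
    omega
  have h1 : cycDist C (C[i]'hi) (C[i']'hi') = i' - i := by
    refine cycDist_unique hnd (C.getElem_mem _) (by omega) ?_
    rw [List.Nodup.idxOf_getElem hnd, List.Nodup.idxOf_getElem hnd]
    rw [Nat.mod_eq_of_lt (by omega)]
    omega
  have h2 : cycDist C (C[i']'hi') (C[i]'hi) = C.length - (i' - i) := by
    have := cycDist_add hnd (C.getElem_mem hi) (C.getElem_mem hi') hne
    omega
  rcases hadj with h | h
  · left
    have := chord hk hC hfree (C.getElem_mem _) (C.getElem_mem _) hne h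
    omega
  · right
    have := chord hk hC hfree (C.getElem_mem _) (C.getElem_mem _) (Ne.symm hne) h
    omega

omit [DecidableEq V] in
lemma head?_eq' (l : List V) (h : 0 < l.length) : l.head? = some (l[0]'h) := by
  rw [List.head?_eq_getElem?, List.getElem?_eq_getElem h]

omit [DecidableEq V] in
lemma getLast?_eq' (l : List V) {m : ℕ} (h : l.length = m + 1) :
    l.getLast? = some (l[m]'(by omega)) := by
  conv_lhs => rw [List.getLast?_eq_getElem?, h]
  simp

lemma mod_small {a n : ℕ} (hn : 0 < n) (h : a < 2*n) :
    a % n = if a < n then a else a - n := by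
  split_ifs with h1
  · exact Nat.mod_eq_of_lt h1
  · rw [Nat.mod_eq_sub_mod (by omega), Nat.mod_eq_of_lt (by omega)]

omit [DecidableEq V] in
lemma getElem_congr' (l : List V) {i j : ℕ} (hij : i = j) (hi : i < l.length) :
    l[i]'hi = l[j]'(hij ▸ hi) := by subst hij; rfl

/-- index pattern for the bispindle inside a complete cycle of length 2k-1 -/
def gfun (k i : ℕ) : ℕ :=
  if i = 0 then 0 else if i ≤ k-2 then i+1 else if i = k-1 then k+1 else 1

lemma not_complete {k : ℕ} (hk : 3 ≤ k) (hC : DiCycle A C) (hfree : ¬ SubdivB A k 1 1)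
    (hn : C.length = 2*k-1) :
    ¬ (∀ a ∈ C, ∀ b ∈ C, a ≠ b → (A a b ∨ A b a)) := by
  intro hcomp
  have hnd := hC.2.2.1
  have hn0 : 0 < C.length := by omega
  -- every short forward jump is an arc
  have harc : ∀ (i d : ℕ) (hi : i < C.length), 1 ≤ d → d ≤ k-1 →
      A (C[i]'hi) (C[(i+d) % C.length]'(Nat.mod_lt _ hn0)) := by
    intro i d hi h1 h2
    have hdn : d < C.length := by omega
    have hmod : (i + d) % C.length = if i + d < C.length then i + d else i + d - C.length :=
      mod_small hn0 (by omega)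
    have hne : (C[i]'hi) ≠ (C[(i+d) % C.length]'(Nat.mod_lt _ hn0)) := by
      intro h
      have := (hnd.getElem_inj_iff).1 h
      rw [hmod] at this
      split_ifs at this <;> first | contradiction | omega
    rcases hcomp _ (C.getElem_mem _) _ (C.getElem_mem _) hne with h | h
    · exact h
    · exfalso
      have hd1 : cycDist C (C[i]'hi) (C[(i+d) % C.length]'(Nat.mod_lt _ hn0)) = d :=
        cycDist_getElem hnd hi hdn
      have hadd := cycDist_add hnd (C.getElem_mem hi) (C.getElem_mem _) hne
      have := chord hk hC hfree (C.getElem_mem _) (C.getElem_mem _) (Ne.symm hne) h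
      omega
  have key : ∀ (a b : ℕ) (ha : a < C.length) (hb : b < C.length),
      (∃ d, 1 ≤ d ∧ d ≤ k-1 ∧ (a + d) % C.length = b) → A (C[a]'ha) (C[b]'hb) := by
    rintro a b ha hb ⟨d, h1, h2, hde⟩
    have := harc a d ha h1 h2
    rwa [getElem_congr' C hde] at this
  -- facts about gfun
  have hglt : ∀ i, gfun k i < C.length := by
    intro i; unfold gfun; split_ifs <;> first | contradiction | omega
  have hgmod : ∀ i, gfun k i % C.length = gfun k i := fun i => Nat.mod_eq_of_lt (hglt i)
  have hg0 : gfun k 0 = 0 := by unfold gfun; simp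
  have hgk : gfun k k = 1 := by unfold gfun; split_ifs <;> first | contradiction | omega
  have ginj : ∀ i ≤ k, ∀ j ≤ k, gfun k i = gfun k j → i = j := by
    intro i hi j hj h; unfold gfun at h; split_ifs at h <;> first | contradiction | omega
  have hgne_k : ∀ i, gfun k i ≠ k := by
    intro i; unfold gfun; split_ifs <;> first | contradiction | omega
  have hstep : ∀ i, i < k → ∃ d, 1 ≤ d ∧ d ≤ k-1 ∧ (gfun k i + d) % C.length = gfun k (i+1) := by
    intro i hi
    by_cases h0 : i = 0
    · subst h0
      refine ⟨2, by omega, by omega, ?_⟩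
      have h1 : gfun k 1 = 2 := by unfold gfun; split_ifs <;> first | contradiction | omega
      rw [hg0, h1, mod_small hn0 (by omega)]
      split_ifs <;> first | contradiction | omega
    · by_cases h1 : i ≤ k-3
      · have hgi : gfun k i = i+1 := by unfold gfun; split_ifs <;> first | contradiction | omega
        have hgi1 : gfun k (i+1) = i+2 := by unfold gfun; split_ifs <;> first | contradiction | omega
        refine ⟨1, by omega, by omega, ?_⟩
        rw [hgi, hgi1, mod_small hn0 (by omega)]
        split_ifs <;> first | contradiction | omega
      · by_cases h2 : i = k-2
        · have hgi : gfun k i = k-1 := by unfold gfun; split_ifs <;> first | contradiction | omega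
          have hgi1 : gfun k (i+1) = k+1 := by unfold gfun; split_ifs <;> first | contradiction | omega
          refine ⟨2, by omega, by omega, ?_⟩
          rw [hgi, hgi1, mod_small hn0 (by omega)]
          split_ifs <;> first | contradiction | omega
        · have h3 : i = k-1 := by omega
          have hgi : gfun k i = k+1 := by unfold gfun; split_ifs <;> first | contradiction | omega
          have hgi1 : gfun k (i+1) = 1 := by unfold gfun; split_ifs <;> first | contradiction | omega
          refine ⟨k-1, by omega, by omega, ?_⟩
          rw [hgi, hgi1, mod_small hn0 (by omega)]
          split_ifs <;> first | contradiction | omega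
  -- the three paths
  set F : ℕ → V := fun i => C[gfun k i % C.length]'(Nat.mod_lt _ hn0) with hF
  set P1 : List V := (List.range (k+1)).map F with hP1
  have hP1len : P1.length = k + 1 := by rw [hP1]; simp
  have hP1get : ∀ (j : ℕ) (hj : j < k+1), P1[j]'(by omega) = F j := by
    intro j hj
    simp [hP1]
  have hchain : ∀ i, i < k → A (F i) (F (i+1)) := by
    intro i hi
    obtain ⟨d, hd1, hd2, hde⟩ := hstep i hi
    show A (C[gfun k i % C.length]'(Nat.mod_lt _ hn0)) (C[gfun k (i+1) % C.length]'(Nat.mod_lt _ hn0))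
    refine key _ _ _ _ ⟨d, hd1, hd2, ?_⟩
    rw [hgmod i, hgmod (i+1)]
    exact hde
  have hP1chain : P1.Chain' A := by
    rw [List.Chain', List.isChain_iff_getElem]
    intro i hi
    rw [hP1len] at hi
    rw [hP1get i (by omega), hP1get (i+1) (by omega)]
    exact hchain i (by omega)
  have hP1nodup : P1.Nodup := by
    rw [hP1]
    refine List.Nodup.map_on ?_ List.nodup_range
    intro x hx y hy hxy
    simp only [List.mem_range] at hx hy
    have h1 : gfun k x % C.length = gfun k y % C.length := (hnd.getElem_inj_iff).1 hxy
    rw [hgmod, hgmod] at h1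
    exact ginj x (by omega) y (by omega) h1
  have hP1head : P1.head? = some (C[0]'hn0) := by
    rw [head?_eq' P1 (by omega), hP1get 0 (by omega)]
    show some (C[gfun k 0 % C.length]'(Nat.mod_lt _ hn0)) = _
    rw [getElem_congr' C (show gfun k 0 % C.length = 0 by rw [hg0, Nat.zero_mod])]
  have hP1last : P1.getLast? = some (C[1]'(by omega)) := by
    rw [getLast?_eq' P1 hP1len, hP1get k (by omega)]
    show some (C[gfun k k % C.length]'(Nat.mod_lt _ hn0)) = _
    rw [getElem_congr' C (show gfun k k % C.length = 1 by rw [hgk, Nat.mod_eq_of_lt (by omega)])]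
  have harc01 : A (C[0]'hn0) (C[1]'(by omega)) :=
    key 0 1 hn0 (by omega) ⟨1, by omega, by omega,
      by rw [Nat.zero_add, Nat.mod_eq_of_lt (by omega)]⟩
  have harc1k : A (C[1]'(by omega)) (C[k]'(by omega)) :=
    key 1 k (by omega) (by omega) ⟨k-1, by omega, by omega,
      by rw [mod_small hn0 (by omega)]; split_ifs <;> first | contradiction | omega⟩
  have harck0 : A (C[k]'(by omega)) (C[0]'hn0) :=
    key k 0 (by omega) hn0 ⟨k-1, by omega, by omega,
      by rw [mod_small hn0 (by omega)]; split_ifs <;> first | contradiction | omega⟩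
  have hne01 : (C[0]'hn0) ≠ (C[1]'(by omega)) := by
    intro h; have := (hnd.getElem_inj_iff).1 h; omega
  have hne1k : (C[1]'(by omega)) ≠ (C[k]'(by omega)) := by
    intro h; have := (hnd.getElem_inj_iff).1 h; omega
  have hne10 : (C[1]'(by omega)) ≠ (C[0]'hn0) := by
    intro h; have := (hnd.getElem_inj_iff).1 h; omega
  have hnek0 : (C[k]'(by omega)) ≠ (C[0]'hn0) := by
    intro h; have := (hnd.getElem_inj_iff).1 h; omega
  have hdP1 : DiPath A (C[0]'hn0) (C[1]'(by omega)) P1 :=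
    ⟨hP1chain, hP1nodup, hP1head, hP1last⟩
  have hdP2 : DiPath A (C[0]'hn0) (C[1]'(by omega)) [C[0]'hn0, C[1]'(by omega)] :=
    ⟨List.isChain_pair.2 harc01, by simp [hne01], rfl, rfl⟩
  have hdP3 : DiPath A (C[1]'(by omega)) (C[0]'hn0)
      [C[1]'(by omega), C[k]'(by omega), C[0]'hn0] := by
    refine ⟨List.isChain_cons_cons.2 ⟨harc1k, List.isChain_pair.2 harck0⟩, ?_, rfl, rfl⟩
    simp [hne1k, hne10, hnek0]
  have hmemP1int : ∀ x ∈ internals P1, ∃ j, ∃ _ : 1 ≤ j ∧ j ≤ k - 1, x = F j := by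
    intro x hx
    obtain ⟨j, hj, hje⟩ := mem_internals.1 hx
    rw [hP1len] at hj
    refine ⟨j+1, by omega, ?_⟩
    rw [hje, hP1get (j+1) (by omega)]
  have hintP3 : internals [C[1]'(by omega), C[k]'(by omega), C[0]'hn0]
      = [C[k]'(by omega)] := rfl
  have hdisj13 : ∀ x, x ∈ internals P1 →
      x ∈ internals [C[1]'(by omega), C[k]'(by omega), C[0]'hn0] → False := by
    intro x h1 h3
    rw [hintP3, List.mem_singleton] at h3
    obtain ⟨j, hj, hje⟩ := hmemP1int x h1
    rw [h3] at hje
    have h4 : gfun k j % C.length = k := ((hnd.getElem_inj_iff).1 hje.symm)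
    rw [hgmod] at h4
    exact hgne_k j h4
  refine hfree ⟨C[0]'hn0, C[1]'(by omega), P1, [C[0]'hn0, C[1]'(by omega)],
    [C[1]'(by omega), C[k]'(by omega), C[0]'hn0], hdP1, hdP2, hdP3,
    by rw [hP1len], by simp, by simp, ?_, ?_, ?_, ?_⟩
  · intro h
    have h2 := hP1len
    rw [h] at h2
    simp at h2
    omega
  · exact ⟨fun x _ h => by simp [internals] at h, fun x h => by simp [internals] at h⟩
  · exact ⟨fun x h1 h3 => hdisj13 x h1 h3, fun x h3 h1 => hdisj13 x h1 h3⟩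
  · exact ⟨fun x h => by simp [internals] at h, fun x _ h => by simp [internals] at h⟩
end Aux


/-- In a strong `B(k,1;1)`-subdivision-free digraph (`k ≥ 3`), the subdigraph induced
by a directed cycle of length at least `2k-2` has maximum degree at most `2k-2` in its
underlying graph, and chromatic number at most `2k-2`. -/
theorem stmt10 {V : Type u} [Fintype V] (k : ℕ) (hk : 3 ≤ k) (A : V → V → Prop)
    (hstrong : StrongConn A) (hfree : ¬ SubdivB A k 1 1)
    (C : List V) (hC : DiCycle A C) (hlen : 2 * k - 2 ≤ C.length) :
    (∀ v ∈ C, {u | u ∈ C ∧ u ≠ v ∧ (A u v ∨ A v u)}.ncard ≤ 2 * k - 2) ∧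
    ((SimpleGraph.fromRel A).induce {v | v ∈ C}).chromaticNumber
      ≤ ((2 * k - 2 : ℕ) : ℕ∞) := by
  classical
  have hnd : C.Nodup := hC.2.2.1
  have hn0 : 0 < C.length := List.length_pos_iff.2 hC.1
  constructor
  · intro v hv
    exact deg_bound hk hC hfree hv
  · suffices h : ((SimpleGraph.fromRel A).induce {v | v ∈ C}).Colorable (2*k-2) from
      h.chromaticNumber_le
    rw [SimpleGraph.colorable_iff_exists_bdd_nat_coloring]
    have hadj : ∀ a b : {v // v ∈ {v | v ∈ C}},
        ((SimpleGraph.fromRel A).induce {v | v ∈ C}).Adj a b →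
        (a:V) ≠ (b:V) ∧ (A a b ∨ A b a) := by
      intro a b hab
      simp only [SimpleGraph.comap_adj, SimpleGraph.fromRel_adj] at hab
      exact hab
    have hidx : ∀ a : {v // v ∈ {v | v ∈ C}}, C.idxOf (a:V) < C.length :=
      fun a => List.idxOf_lt_length_iff.2 a.2
    have hidx_inj : ∀ a b : {v // v ∈ {v | v ∈ C}}, (a:V) ≠ (b:V) →
        C.idxOf (a:V) ≠ C.idxOf (b:V) := by
      intro a b hne h
      exact hne ((List.idxOf_inj a.2).1 h)
    rcases lt_trichotomy C.length (2*k-1) with hcase | hcase | hcase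
    · -- C is short: use an injective coloring
      refine ⟨SimpleGraph.Coloring.mk (fun w => C.idxOf (w:V)) ?_,
        fun w => show C.idxOf (w:V) < 2*k-2 by have := hidx w; omega⟩
      intro a b hab
      exact hidx_inj a b (hadj a b hab).1
    · -- C has length exactly 2k-1: it is not complete
      have hnc := not_complete hk hC hfree hcase
      push_neg at hnc
      obtain ⟨a, haC, b, hbC, hab, hnadj⟩ := hnc
      have hialt : C.idxOf a < C.length := List.idxOf_lt_length_iff.2 haC
      have hiblt : C.idxOf b < C.length := List.idxOf_lt_length_iff.2 hbC
      have hiaib : C.idxOf a ≠ C.idxOf b := fun h => hab ((List.idxOf_inj haC).1 h)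
      have hjlt : ∀ w : {v // v ∈ {v | v ∈ C}},
          (if (w:V) = b then C.idxOf a else C.idxOf (w:V)) < C.length := by
        intro w
        split_ifs
        · exact hialt
        · exact hidx w
      have hjne : ∀ w : {v // v ∈ {v | v ∈ C}},
          (if (w:V) = b then C.idxOf a else C.idxOf (w:V)) ≠ C.idxOf b := by
        intro w
        split_ifs with h
        · exact hiaib
        · intro he
          exact h ((List.idxOf_inj w.2).1 he)
      refine ⟨SimpleGraph.Coloring.mk
        (fun w => if C.idxOf b < (if (w:V) = b then C.idxOf a else C.idxOf (w:V))
          then (if (w:V) = b then C.idxOf a else C.idxOf (w:V)) - 1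
          else (if (w:V) = b then C.idxOf a else C.idxOf (w:V))) ?_, ?_⟩
      · intro u w huw
        obtain ⟨hne, harc⟩ := hadj u w huw
        intro hcol
        beta_reduce at hcol
        have compress_inj : ∀ x y : ℕ, x ≠ C.idxOf b → y ≠ C.idxOf b →
            (if C.idxOf b < x then x - 1 else x) = (if C.idxOf b < y then y - 1 else y) →
            x = y := by
          intro x y hx hy h
          split_ifs at h <;> omega
        have hjeq : (if (u:V) = b then C.idxOf a else C.idxOf (u:V))
            = (if (w:V) = b then C.idxOf a else C.idxOf (w:V)) :=
          compress_inj _ _ (hjne u) (hjne w) hcol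
        by_cases hub : (u:V) = b <;> by_cases hwb : (w:V) = b
        · exact hne (by rw [hub, hwb])
        · rw [if_pos hub, if_neg hwb] at hjeq
          have hwa : (w:V) = a := (List.idxOf_inj w.2).1 hjeq.symm
          rw [hub, hwa] at harc
          exact harc.elim hnadj.2 hnadj.1
        · rw [if_neg hub, if_pos hwb] at hjeq
          have hua : (u:V) = a := (List.idxOf_inj u.2).1 hjeq
          rw [hua, hwb] at harc
          exact harc.elim hnadj.1 hnadj.2
        · rw [if_neg hub, if_neg hwb] at hjeq
          exact hne ((List.idxOf_inj u.2).1 hjeq)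
      · have compress_lt : ∀ x : ℕ, x < C.length → x ≠ C.idxOf b →
            (if C.idxOf b < x then x - 1 else x) < 2*k-2 := by
          intro x hx hxne
          split_ifs <;> omega
        intro w
        show (if C.idxOf b < (if (w:V) = b then C.idxOf a else C.idxOf (w:V))
          then (if (w:V) = b then C.idxOf a else C.idxOf (w:V)) - 1
          else (if (w:V) = b then C.idxOf a else C.idxOf (w:V))) < 2*k-2
        exact compress_lt _ (hjlt w) (hjne w)
    · -- C is long: block coloring
      obtain ⟨bs, hsum, hbs⟩ := exists_blocks k hk C.length (by omega)
      have main : ∀ u w : {v // v ∈ {v | v ∈ C}}, C.idxOf (u:V) < C.idxOf (w:V) →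
          (A (u:V) (w:V) ∨ A (w:V) (u:V)) →
          pc bs (C.idxOf (u:V)) ≠ pc bs (C.idxOf (w:V)) := by
        intro u w hlt harc heq
        have hi : C.idxOf (u:V) < C.length := hidx u
        have hi' : C.idxOf (w:V) < C.length := hidx w
        have hCu : C[C.idxOf (u:V)]'hi = (u:V) := List.getElem_idxOf _
        have hCw : C[C.idxOf (w:V)]'hi' = (w:V) := List.getElem_idxOf _
        have hed := edge_dist hk hC hfree hi hi' hlt (by rw [hCu, hCw]; exact harc)
        have h1 : k ≤ C.idxOf (w:V) - C.idxOf (u:V) :=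
          pc_L2 bs k (fun x hx => (hbs x hx).1) (by rw [hsum]; exact hi') hlt heq
        have h2 := pc_L1 bs k (fun x hx => (hbs x hx).1) (i := C.idxOf (w:V))
          (by rw [hsum]; exact hi')
        have h3 := pc_le bs (C.idxOf (u:V))
        rw [hsum] at h2
        rcases hed with h | h <;> omega
      refine ⟨SimpleGraph.Coloring.mk (fun w => pc bs (C.idxOf (w:V))) ?_, ?_⟩
      · intro u w huw
        obtain ⟨hne, harc⟩ := hadj u w huw
        rcases Nat.lt_or_ge (C.idxOf (u:V)) (C.idxOf (w:V)) with h | h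
        · exact main u w h harc
        · have hlt : C.idxOf (w:V) < C.idxOf (u:V) := by
            have := hidx_inj u w hne; omega
          exact fun he => (main w u hlt harc.symm) he.symm
      · intro w
        show pc bs (C.idxOf (w:V)) < 2*k-2
        exact pc_lt bs (2*k-2) (fun x hx => (hbs x hx).2) (by rw [hsum]; exact hidx w)
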